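/- Let G ⊂ ℂ be a bounded domain with boundary of planar Lebesgue measure zero, let g ∈ B₂(G), and let γ = Kg be its Cauchy transform. Let φ be an injective holomorphic function on an open neighborhood of the closed unit disk cl(𝔻) such that cl(G) ⊂ φ(𝔻). Then for every ζ ∈ ℂ with |ζ| > 1, (1/2πi)∮_{∂𝔻} γ(φ(t))/(t−ζ) dt = −(1/π)∬_{φ^{-1}(G)} conj(g(φ(w))·φ'(w))/(w−ζ) du dv, where φ^{-1}(G) ⊂ 𝔻 is the preimage of G under φ and w = u + iv. -/

import Mathlib

open Complex MeasureTheory Metric Set Filter Bornology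

/-- Membership in the Bergman space `B₂(G)`: holomorphic with square-integrable modulus. -/
def MemB2 (G : Set ℂ) (g : ℂ → ℂ) : Prop :=
  DifferentiableOn ℂ g G ∧ IntegrableOn (fun z => ‖g z‖ ^ 2) G volume

/-- The Cauchy transform `(Kg)(ζ) = (1/π) ∬_G conj (g z) / (z - ζ) dx dy`. -/
noncomputable def cauchyTransform (G : Set ℂ) (g : ℂ → ℂ) (ζ : ℂ) : ℂ :=
  (1 / Real.pi : ℂ) * ∫ z in G, (starRingEnd ℂ) (g z) / (z - ζ) ∂volume

lemma det_smulRight_restrict (d : ℂ) :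
    (((1 : ℂ →L[ℂ] ℂ).smulRight d).restrictScalars ℝ).det = Complex.normSq d := by
  rw [ContinuousLinearMap.det, ← LinearMap.det_toMatrix Complex.basisOneI,
    Matrix.det_fin_two]
  simp [LinearMap.toMatrix_apply, Complex.normSq_apply]

lemma residue_calc {U : Set ℂ} (hU : IsOpen U) (hUball : closedBall (0:ℂ) 1 ⊆ U)
    {φ : ℂ → ℂ} (hφd : DifferentiableOn ℂ φ U) (hφi : Set.InjOn φ U)
    {ζ : ℂ} (hζ : 1 < ‖ζ‖) {w : ℂ} (hw : w ∈ ball (0:ℂ) 1) (hd : deriv φ w ≠ 0) :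
    (∮ t in C((0:ℂ), 1), (φ w - φ t)⁻¹ * (t - ζ)⁻¹) =
      (2 * Real.pi * I) * (-((deriv φ w)⁻¹ * (w - ζ)⁻¹)) := by
  have hwU : w ∈ U := hUball (ball_subset_closedBall hw)
  set h : ℂ → ℂ := fun t => -((dslope φ w t)⁻¹ * (t - ζ)⁻¹) with hh
  have hds_diff : DifferentiableOn ℂ (dslope φ w) U :=
    (differentiableOn_dslope (hU.mem_nhds hwU)).2 hφd
  have hne : ∀ t ∈ closedBall (0:ℂ) 1, dslope φ w t ≠ 0 := by
    intro t ht
    rcases eq_or_ne t w with rfl | htw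
    · simpa [dslope_same] using hd
    · rw [dslope_of_ne _ htw, slope_def_field]
      have hφne : φ t ≠ φ w := fun hc => htw (hφi (hUball ht) hwU hc)
      exact div_ne_zero (sub_ne_zero.2 hφne) (sub_ne_zero.2 htw)
  set V : Set ℂ := (U ∩ (dslope φ w) ⁻¹' {0}ᶜ) ∩ {ζ}ᶜ with hV
  have hVopen : IsOpen V :=
    (hds_diff.continuousOn.isOpen_inter_preimage hU isOpen_compl_singleton).inter
      isClosed_singleton.isOpen_compl
  have hsubV : closedBall (0:ℂ) 1 ⊆ V := by
    intro t ht
    refine ⟨⟨hUball ht, hne t ht⟩, ?_⟩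
    simp only [mem_compl_iff, mem_singleton_iff]
    intro hc; subst hc
    exact absurd (mem_closedBall_zero_iff.1 ht) (not_le.2 hζ)
  have hVU : V ⊆ U := fun t ht => ht.1.1
  have hdiffV : DifferentiableOn ℂ h V := by
    refine DifferentiableOn.neg ?_
    refine DifferentiableOn.mul ?_ ?_
    · exact ((hds_diff.mono hVU).inv (fun t ht => ht.1.2))
    · exact (differentiableOn_id.sub (differentiableOn_const ζ)).inv
        (fun t ht => sub_ne_zero.2 ht.2)
  have hdc : DiffContOnCl ℂ h (ball (0:ℂ) 1) := by
    refine DifferentiableOn.diffContOnCl ?_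
    rw [closure_ball (0:ℂ) one_ne_zero]
    exact hdiffV.mono hsubV
  have key := hdc.circleIntegral_sub_inv_smul hw
  have heq : EqOn (fun t => (φ w - φ t)⁻¹ * (t - ζ)⁻¹)
      (fun t : ℂ => (t - w)⁻¹ • h t) (sphere (0:ℂ) 1) := by
    intro t ht
    have htn : ‖t‖ = 1 := mem_sphere_zero_iff_norm.1 ht
    have htw : t ≠ w := by
      intro hc; subst hc
      exact absurd htn (by have := mem_ball_zero_iff.1 hw; linarith)
    have htU : t ∈ U := hUball (sphere_subset_closedBall ht)
    have hφne : φ t - φ w ≠ 0 :=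
      sub_ne_zero.2 (fun hc => htw (hφi htU hwU hc))
    have htζ : t - ζ ≠ 0 := by
      intro hc
      rw [sub_eq_zero] at hc
      subst hc; exact absurd htn (by linarith)
    have htw' : t - w ≠ 0 := sub_ne_zero.2 htw
    simp only [hh, smul_eq_mul, dslope_of_ne _ htw, slope_def_field, inv_div]
    rw [show φ w - φ t = -(φ t - φ w) by ring, inv_neg]
    field_simp
  rw [circleIntegral.integral_congr zero_le_one heq, key]
  simp only [hh, dslope_same, smul_eq_mul]

theorem circleIntegral_cauchyTransform_pullback (G : Set ℂ)
    (hGo : IsOpen G) (hGc : IsConnected G) (hGb : Bornology.IsBounded G)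
    (hbd : volume (frontier G) = 0)
    (g : ℂ → ℂ) (hg : MemB2 G g)
    (U : Set ℂ) (hU : IsOpen U) (hUball : Metric.closedBall 0 1 ⊆ U)
    (φ : ℂ → ℂ) (hφd : DifferentiableOn ℂ φ U) (hφi : Set.InjOn φ U)
    (hGsub : closure G ⊆ φ '' Metric.ball 0 1) :
    ∀ ζ : ℂ, 1 < ‖ζ‖ →
      (1 / (2 * Real.pi * Complex.I)) *
          (∮ t in C((0:ℂ), 1), cauchyTransform G g (φ t) / (t - ζ)) =
        -((1 / Real.pi : ℂ) *
          ∫ w in φ ⁻¹' G ∩ Metric.ball 0 1,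
            (starRingEnd ℂ) (g (φ w) * deriv φ w) / (w - ζ) ∂volume) := by
  intro ζ hζ
  have hball_sub : ball (0:ℂ) 1 ⊆ U := ball_subset_closedBall.trans hUball
  set s : Set ℂ := φ ⁻¹' G ∩ ball 0 1 with hs_def
  have hsU : s ⊆ U := fun w hw => hball_sub hw.2
  have hso : IsOpen s := by
    have h1 : IsOpen (U ∩ φ ⁻¹' G) := hφd.continuousOn.isOpen_inter_preimage hU hGo
    have : s = (U ∩ φ ⁻¹' G) ∩ ball 0 1 := by
      ext w
      simp only [hs_def, Set.mem_inter_iff, Set.mem_preimage]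
      exact ⟨fun ⟨h1, h2⟩ => ⟨⟨hball_sub h2, h1⟩, h2⟩, fun ⟨⟨_, h1⟩, h2⟩ => ⟨h1, h2⟩⟩
    rw [this]
    exact (h1.inter isOpen_ball)
  have hsm : MeasurableSet s := hso.measurableSet
  have himg : φ '' s = G := by
    apply subset_antisymm
    · rintro z ⟨w, hw, rfl⟩; exact hw.1
    · intro z hz
      obtain ⟨w, hw, rfl⟩ := hGsub (subset_closure hz)
      exact ⟨w, ⟨hz, hw⟩, rfl⟩
  have hinj : Set.InjOn φ s := hφi.mono hsU
  have hder : ∀ w ∈ s, HasFDerivWithinAt φ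
      (((1 : ℂ →L[ℂ] ℂ).smulRight (deriv φ w)).restrictScalars ℝ) s w := by
    intro w hw
    exact (((hφd.differentiableAt (hU.mem_nhds (hsU hw))).hasDerivAt).hasFDerivAt.restrictScalars
      ℝ).hasFDerivWithinAt
  -- change of variables
  have hCOV : ∀ F : ℂ → ℂ, (∫ z in G, F z ∂volume) =
      ∫ w in s, (Complex.normSq (deriv φ w) : ℝ) • F (φ w) ∂volume := by
    intro F
    rw [← himg, integral_image_eq_integral_abs_det_fderiv_smul volume hsm hder hinj]
    simp only [det_smulRight_restrict, _root_.abs_of_nonneg (Complex.normSq_nonneg _)]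
  -- integrability of ‖g‖ on G
  have hGfin : volume G < ⊤ := by
    obtain ⟨r, hr⟩ := hGb.subset_closedBall 0
    exact lt_of_le_of_lt (measure_mono hr) (measure_closedBall_lt_top)
  have hgm : AEStronglyMeasurable g (volume.restrict G) :=
    hg.1.continuousOn.aestronglyMeasurable hGo.measurableSet
  have hIntG : IntegrableOn (fun z => ‖g z‖) G volume := by
    refine Integrable.mono' ((integrableOn_const (C := (1:ℝ)) hGfin.ne).add hg.2) hgm.norm ?_
    filter_upwards with z
    have h0 : (0:ℝ) ≤ ‖g z‖ := norm_nonneg _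
    simp only [norm_norm, Pi.add_apply]
    nlinarith [sq_nonneg (‖g z‖ - 1)]
  have hH : IntegrableOn (fun w => Complex.normSq (deriv φ w) * ‖g (φ w)‖) s volume := by
    have := (integrableOn_image_iff_integrableOn_abs_det_fderiv_smul volume hsm hder hinj
      (fun z => ‖g z‖)).1 (by rw [himg]; exact hIntG)
    simpa [det_smulRight_restrict, _root_.abs_of_nonneg (Complex.normSq_nonneg _), smul_eq_mul]
      using this
  -- basic nonvanishing facts
  have hwζ : ∀ w ∈ ball (0:ℂ) 1, w - ζ ≠ 0 := by
    intro w hw hc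
    rw [sub_eq_zero] at hc
    subst hc
    exact absurd (mem_ball_zero_iff.1 hw) (by linarith)
  have htζ : ∀ θ : ℝ, circleMap 0 1 θ - ζ ≠ 0 := by
    intro θ hc
    rw [sub_eq_zero] at hc
    have : ‖circleMap 0 1 θ‖ = 1 := by
      simpa using abs_circleMap_zero 1 θ
    rw [← hc] at hζ
    linarith
  -- sphere points are mapped outside `closure G`
  have hnot : ∀ t ∈ sphere (0:ℂ) 1, φ t ∉ closure G := by
    intro t ht hc
    obtain ⟨w, hw, hww⟩ := hGsub hc
    have htw : t = w :=
      hφi (hUball (sphere_subset_closedBall ht)) (hball_sub hw) hww.symm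
    have h1 : ‖t‖ = 1 := mem_sphere_zero_iff_norm.1 ht
    have h2 : ‖w‖ < 1 := mem_ball_zero_iff.1 hw
    rw [htw] at h1; linarith
  -- uniform separation of `φ (circleMap 0 1 θ)` from `G`
  obtain ⟨ε, hε, hsep⟩ : ∃ ε > (0:ℝ), ∀ (θ : ℝ), ∀ z ∈ G,
      ε ≤ ‖z - φ (circleMap 0 1 θ)‖ := by
    have hGne : (closure G).Nonempty := hGc.nonempty.closure
    have hsphne : (sphere (0:ℂ) 1).Nonempty := ⟨1, by simp⟩
    have hcont : ContinuousOn (fun t => infDist (φ t) (closure G)) (sphere (0:ℂ) 1) :=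
      (continuous_infDist_pt (closure G)).comp_continuousOn
        (hφd.continuousOn.mono (fun t ht => hUball (sphere_subset_closedBall ht)))
    obtain ⟨t₀, ht₀, hmin⟩ := (isCompact_sphere (0:ℂ) 1).exists_isMinOn hsphne hcont
    refine ⟨infDist (φ t₀) (closure G), ?_, ?_⟩
    · exact (isClosed_closure.notMem_iff_infDist_pos hGne).1 (hnot t₀ ht₀)
    · intro θ z hz
      have h1 : infDist (φ t₀) (closure G) ≤ infDist (φ (circleMap 0 1 θ)) (closure G) :=
        hmin (circleMap_mem_sphere 0 zero_le_one θ)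
      have h2 : infDist (φ (circleMap 0 1 θ)) (closure G) ≤ dist (φ (circleMap 0 1 θ)) z :=
        infDist_le_dist_of_mem (subset_closure hz)
      have h3 : dist (φ (circleMap 0 1 θ)) z = ‖z - φ (circleMap 0 1 θ)‖ := by
        rw [dist_eq_norm, norm_sub_rev]
      linarith
  -- the two families of integrands
  set A : ℂ → ℂ := fun w => ((Complex.normSq (deriv φ w) : ℝ) : ℂ) * (starRingEnd ℂ) (g (φ w))
    with hA
  set Rk : ℂ → ℂ → ℂ := fun w t => (φ w - φ t)⁻¹ * (t - ζ)⁻¹ with hRk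
  -- Step 1 : rewrite the Cauchy transform via change of variables
  have step1 : ∀ t ∈ sphere (0:ℂ) 1, cauchyTransform G g (φ t) / (t - ζ) =
      (1 / Real.pi : ℂ) * ∫ w in s, A w * Rk w t ∂volume := by
    intro t ht
    rw [cauchyTransform, hCOV (fun z => (starRingEnd ℂ) (g z) / (z - φ t)),
      div_eq_mul_inv, mul_assoc, ← integral_mul_const]
    congr 1
    refine integral_congr_ae (Eventually.of_forall fun w => ?_)
    simp only [hA, hRk, Complex.real_smul, div_eq_mul_inv]
    ring
  -- Fubini
  have hswap : (∮ t in C((0:ℂ), 1), ∫ w in s, A w * Rk w t ∂volume) =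
      ∫ w in s, A w * (∮ t in C((0:ℂ), 1), Rk w t) ∂volume := by
    have hsfin : volume s < ⊤ :=
      lt_of_le_of_lt (measure_mono inter_subset_right) measure_ball_lt_top
    set T : Set (ℝ × ℂ) := Ioc (0:ℝ) (2*Real.pi) ×ˢ s with hT_def
    have hTm : MeasurableSet T := measurableSet_Ioc.prod hsm
    set u : ℝ × ℂ → ℂ :=
      fun p => (circleMap 0 1 p.1 * I) * (A p.2 * Rk p.2 (circleMap 0 1 p.1)) with hu
    haveI : IsFiniteMeasure (volume.restrict (Ioc (0:ℝ) (2*Real.pi))) :=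
      ⟨by rw [Measure.restrict_apply_univ]; exact measure_Ioc_lt_top⟩
    haveI : IsFiniteMeasure (volume.restrict s) :=
      ⟨by rw [Measure.restrict_apply_univ]; exact hsfin⟩
    have hφc : ContinuousOn φ U := hφd.continuousOn
    have hdc : ContinuousOn (deriv φ) U := ((hφd.analyticOnNhd hU).deriv).continuousOn
    have hmapsU : Set.MapsTo (fun p : ℝ × ℂ => p.2) T U := fun p hp => hsU hp.2
    have hsnd : ContinuousOn (fun p : ℝ × ℂ => p.2) T := continuous_snd.continuousOn
    have hfstc : Continuous (fun p : ℝ × ℂ => circleMap 0 1 p.1) :=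
      (continuous_circleMap 0 1).comp continuous_fst
    have hφsnd : ContinuousOn (fun p : ℝ × ℂ => φ p.2) T := hφc.comp hsnd hmapsU
    have hφfst : ContinuousOn (fun p : ℝ × ℂ => φ (circleMap 0 1 p.1)) T :=
      hφc.comp hfstc.continuousOn (fun p _ =>
        hUball (sphere_subset_closedBall (circleMap_mem_sphere 0 zero_le_one p.1)))
    have hne2 : ∀ p ∈ T, φ p.2 - φ (circleMap 0 1 p.1) ≠ 0 := by
      intro p hp hc
      have h1 : ε ≤ ‖φ p.2 - φ (circleMap 0 1 p.1)‖ := hsep p.1 _ hp.2.1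
      rw [hc, norm_zero] at h1
      linarith
    have humc : ContinuousOn u T := by
      refine ((hfstc.mul continuous_const).continuousOn).mul (ContinuousOn.mul ?_ ?_)
      · refine ContinuousOn.mul ?_ ?_
        · exact (Complex.continuous_ofReal.comp Complex.continuous_normSq).comp_continuousOn
            (hdc.comp hsnd hmapsU)
        · exact continuous_star.comp_continuousOn
            (hg.1.continuousOn.comp hφsnd (fun p hp => hp.2.1))
      · exact ((hφsnd.sub hφfst).inv₀ hne2).mul
          ((hfstc.sub continuous_const).continuousOn.inv₀ (fun p _ => htζ p.1))
    have hum : AEStronglyMeasurable u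
        ((volume.restrict (Ioc (0:ℝ) (2*Real.pi))).prod (volume.restrict s)) := by
      rw [Measure.prod_restrict]
      exact humc.aestronglyMeasurable hTm
    have hmaj : Integrable (fun p : ℝ × ℂ => (ε⁻¹ * (‖ζ‖ - 1)⁻¹) *
        (Complex.normSq (deriv φ p.2) * ‖g (φ p.2)‖))
        ((volume.restrict (Ioc (0:ℝ) (2*Real.pi))).prod (volume.restrict s)) :=
      (integrable_const _).mul_prod hH
    have huint : Integrable u
        ((volume.restrict (Ioc (0:ℝ) (2*Real.pi))).prod (volume.restrict s)) := by
      refine hmaj.mono' hum ?_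
      rw [Measure.prod_restrict]
      refine (ae_restrict_mem hTm).mono (fun p hp => ?_)
      have hzb : ε ≤ ‖φ p.2 - φ (circleMap 0 1 p.1)‖ := hsep p.1 _ hp.2.1
      have hcn : ‖circleMap 0 1 p.1‖ = 1 := by
        simpa using abs_circleMap_zero 1 p.1
      have hzb2 : ‖ζ‖ - 1 ≤ ‖circleMap 0 1 p.1 - ζ‖ := by
        have h2 := norm_sub_norm_le ζ (circleMap 0 1 p.1)
        rw [norm_sub_rev] at h2
        rw [hcn] at h2
        linarith
      have hζ1 : (0:ℝ) < ‖ζ‖ - 1 := by linarith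
      calc ‖u p‖ = (Complex.normSq (deriv φ p.2) * ‖g (φ p.2)‖) *
            (‖φ p.2 - φ (circleMap 0 1 p.1)‖⁻¹ * ‖circleMap 0 1 p.1 - ζ‖⁻¹) := by
            simp only [hu, hA, hRk, norm_mul, norm_inv, hcn, Complex.norm_I, one_mul,
              Complex.norm_real, RCLike.norm_conj, Real.norm_eq_abs,
              _root_.abs_of_nonneg (Complex.normSq_nonneg _)]
        _ ≤ (Complex.normSq (deriv φ p.2) * ‖g (φ p.2)‖) * (ε⁻¹ * (‖ζ‖ - 1)⁻¹) := by
            have b1 : ‖φ p.2 - φ (circleMap 0 1 p.1)‖⁻¹ ≤ ε⁻¹ := inv_anti₀ hε hzb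
            have b2 : ‖circleMap 0 1 p.1 - ζ‖⁻¹ ≤ (‖ζ‖ - 1)⁻¹ := inv_anti₀ hζ1 hzb2
            have hnn : (0:ℝ) ≤ Complex.normSq (deriv φ p.2) * ‖g (φ p.2)‖ :=
              mul_nonneg (Complex.normSq_nonneg _) (norm_nonneg _)
            exact mul_le_mul_of_nonneg_left
              (mul_le_mul b1 b2 (by positivity) (inv_nonneg.2 hε.le)) hnn
        _ = (ε⁻¹ * (‖ζ‖ - 1)⁻¹) * (Complex.normSq (deriv φ p.2) * ‖g (φ p.2)‖) := by ring
    have e1 : (∮ t in C((0:ℂ), 1), ∫ w in s, A w * Rk w t ∂volume) =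
        ∫ θ in Ioc (0:ℝ) (2*Real.pi), (∫ w in s, u (θ, w) ∂volume) ∂volume := by
      rw [circleIntegral, intervalIntegral.integral_of_le (by positivity : (0:ℝ) ≤ 2*Real.pi)]
      refine setIntegral_congr_fun measurableSet_Ioc (fun θ _ => ?_)
      rw [deriv_circleMap, smul_eq_mul, ← integral_const_mul]
    have e2 : (∫ θ in Ioc (0:ℝ) (2*Real.pi), (∫ w in s, u (θ, w) ∂volume) ∂volume) =
        ∫ w in s, (∫ θ in Ioc (0:ℝ) (2*Real.pi), u (θ, w) ∂volume) ∂volume :=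
      integral_integral_swap huint
    have e3 : ∀ w ∈ s, (∫ θ in Ioc (0:ℝ) (2*Real.pi), u (θ, w) ∂volume) =
        A w * (∮ t in C((0:ℂ), 1), Rk w t) := by
      intro w hw
      rw [← intervalIntegral.integral_of_le (by positivity : (0:ℝ) ≤ 2*Real.pi),
        ← circleIntegral.integral_const_mul]
      rw [circleIntegral]
      refine intervalIntegral.integral_congr (fun θ _ => ?_)
      rw [deriv_circleMap, smul_eq_mul]
    rw [e1, e2]
    exact setIntegral_congr_fun hsm e3
  -- final assembly
  calc (1 / (2 * ↑Real.pi * I)) * (∮ t in C((0:ℂ), 1), cauchyTransform G g (φ t) / (t - ζ))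
      = (1 / (2 * ↑Real.pi * I)) *
        (∮ t in C((0:ℂ), 1), (1 / Real.pi : ℂ) * ∫ w in s, A w * Rk w t ∂volume) := by
        rw [circleIntegral.integral_congr zero_le_one (fun t ht => step1 t ht)]
    _ = (1 / (2 * ↑Real.pi * I)) * ((1 / Real.pi : ℂ) *
        (∮ t in C((0:ℂ), 1), ∫ w in s, A w * Rk w t ∂volume)) := by
        rw [circleIntegral.integral_const_mul]
    _ = (1 / Real.pi : ℂ) *
        ∫ w in s, (1 / (2 * ↑Real.pi * I)) * (A w * (∮ t in C((0:ℂ), 1), Rk w t)) ∂volume := by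
        rw [hswap, integral_const_mul]
        ring
    _ = (1 / Real.pi : ℂ) *
        ∫ w in s, -((starRingEnd ℂ) (g (φ w) * deriv φ w) / (w - ζ)) ∂volume := by
        congr 1
        refine setIntegral_congr_fun hsm (fun w hw => ?_)
        by_cases hd : deriv φ w = 0
        · simp [hA, hd]
        · have hres := residue_calc hU hUball hφd hφi hζ hw.2 hd
          simp only [hA, hRk] at hres ⊢
          rw [hres, map_mul, ← Complex.mul_conj]
          have h1 : w - ζ ≠ 0 := hwζ w hw.2
          have h2 : (Real.pi : ℂ) ≠ 0 := Complex.ofReal_ne_zero.2 Real.pi_ne_zero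
          field_simp
    _ = -((1 / Real.pi : ℂ) *
        ∫ w in s, (starRingEnd ℂ) (g (φ w) * deriv φ w) / (w - ζ) ∂volume) := by
        rw [integral_neg]
        ring
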